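/- Let Ω ⊆ ℂ^d be open connected and X ⊆ H(Ω) a topological vector space whose topology is induced by a complete metric and in which convergence implies pointwise convergence on Ω. If Ω is a weak X-domain of holomorphy, then the set of f ∈ X that are non-extendable (in the sense of Riemann domains) is a dense G_δ subset of X. -/

import Mathlib

open Metric Set Filter

section Aux

lemma lemA {g : ℂ → ℂ} {ρ M : ℝ} (hρ : 0 < ρ)
    (hd : DifferentiableOn ℂ g (ball 0 ρ))
    (hb : ∀ t ∈ ball (0:ℂ) ρ, ‖g t‖ ≤ M) :
    (∀ τ : ℂ, ‖τ‖ ≤ ρ/2 → ‖g τ - g 0 - deriv g 0 * τ‖ ≤ 6*M/ρ^2 * ‖τ‖^2) ∧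
      ‖deriv g 0‖ ≤ 2*M/ρ := by
  have hM0 : 0 ≤ M := (norm_nonneg _).trans (hb 0 (mem_ball_self hρ))
  obtain ⟨r, hr⟩ : ∃ r : ℝ, r = 3*ρ/4 := ⟨_, rfl⟩
  have hrpos : 0 < r := by rw [hr]; positivity
  have hrρ : r < ρ := by linarith
  set R : NNReal := ⟨r, hrpos.le⟩ with hR
  have hcR : (R : ℝ) = r := rfl
  have hdc : DifferentiableOn ℂ g (closedBall 0 (R:ℝ)) := by
    apply hd.mono
    intro x hx
    simp only [mem_closedBall, mem_ball, hcR] at hx ⊢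
    exact lt_of_le_of_lt hx hrρ
  have hps : HasFPowerSeriesOnBall g (cauchyPowerSeries g 0 R) 0 R :=
    hdc.hasFPowerSeriesOnBall (by exact_mod_cast hrpos)
  set p := cauchyPowerSeries g 0 R with hp
  have hmem : ∀ θ : ℝ, circleMap 0 (R:ℝ) θ ∈ ball (0:ℂ) ρ := fun θ => by
    simp only [mem_ball, dist_zero_right, norm_circleMap_zero,
      hcR, abs_of_pos hrpos]
    exact hrρ
  -- coefficient bound
  have hcoeff : ∀ n, ‖p.coeff n‖ ≤ M / r ^ n := by
    intro n
    have h1 : ‖p.coeff n‖ ≤ ‖p n‖ := by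
      have h := (p n).le_opNorm 1
      simp only [Pi.one_apply, norm_one, Finset.prod_const_one, mul_one] at h
      exact h
    have h2 : ‖p n‖ ≤ ((2 * Real.pi)⁻¹ * ∫ θ : ℝ in (0)..2 * Real.pi,
        ‖g (circleMap 0 R θ)‖) * |(R:ℝ)|⁻¹ ^ n := norm_cauchyPowerSeries_le g 0 R n
    have hint : (∫ θ : ℝ in (0)..2 * Real.pi, ‖g (circleMap 0 (R:ℝ) θ)‖) ≤
        2 * Real.pi * M := by
      have : (∫ θ : ℝ in (0)..2 * Real.pi, ‖g (circleMap 0 (R:ℝ) θ)‖) ≤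
          ∫ _ : ℝ in (0)..2 * Real.pi, M := by
        apply intervalIntegral.integral_mono_on Real.two_pi_pos.le
        · apply Continuous.intervalIntegrable
          exact (hd.continuousOn.comp_continuous (continuous_circleMap 0 (R:ℝ))
            (fun θ => hmem θ)).norm
        · exact intervalIntegrable_const
        · intro θ _
          exact hb _ (hmem θ)
      simpa [mul_comm] using this
    have habs : |(R:ℝ)| = r := by rw [hcR]; exact abs_of_pos hrpos
    have step : ((2 * Real.pi)⁻¹ * ∫ θ : ℝ in (0)..2 * Real.pi,
        ‖g (circleMap 0 (R:ℝ) θ)‖) * |(R:ℝ)|⁻¹ ^ n ≤ ((2 * Real.pi)⁻¹ * (2 * Real.pi * M)) * |(R:ℝ)|⁻¹ ^ n := by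
      have := mul_le_mul_of_nonneg_left hint (by positivity : (0:ℝ) ≤ (2 * Real.pi)⁻¹)
      exact mul_le_mul_of_nonneg_right this (by positivity)
    calc ‖p.coeff n‖ ≤ ‖p n‖ := h1
      _ ≤ ((2 * Real.pi)⁻¹ * (2 * Real.pi * M)) * |(R:ℝ)|⁻¹ ^ n := h2.trans step
      _ = M / r ^ n := by
          rw [habs, inv_mul_cancel_left₀ Real.two_pi_pos.ne', div_eq_mul_inv, inv_pow]
  have hderiv : deriv g 0 = p.coeff 1 := hps.hasFPowerSeriesAt.deriv
  constructor
  · intro τ hτ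
    have hτr : ‖τ‖ < r := lt_of_le_of_lt hτ (by linarith)
    have hτball : τ ∈ Metric.eball (0:ℂ) R := by
      rw [Metric.emetric_ball_nnreal]
      simpa [mem_ball, dist_zero_right, hcR] using hτr
    have hsum := hps.hasSum hτball
    set a : ℕ → ℂ := fun n => τ ^ n * p.coeff n with ha
    have hsum' : HasSum a (g τ) := by
      simpa [ha, FormalMultilinearSeries.apply_eq_pow_smul_coeff, smul_eq_mul]
        using hsum
    have htail : HasSum (fun n => a (n+2)) (g τ - (a 0 + a 1)) := by
      have h := (hasSum_nat_add_iff' 2).mpr hsum'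
      simpa [Finset.sum_range_succ] using h
    have hc0 : p.coeff 0 = g 0 := hps.hasFPowerSeriesAt.coeff_zero 1
    have ha0 : a 0 = g 0 := by simp [ha, hc0]
    have ha1 : a 1 = deriv g 0 * τ := by rw [hderiv]; simp [ha]; ring
    have heq : g τ - g 0 - deriv g 0 * τ = g τ - (a 0 + a 1) := by
      rw [ha0, ha1]; ring
    obtain ⟨q, hqdef⟩ : ∃ q : ℝ, q = ‖τ‖ / r := ⟨_, rfl⟩
    have hq0 : 0 ≤ q := by rw [hqdef]; positivity
    have hq23 : q ≤ 2/3 := by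
      rw [hqdef, div_le_iff₀ hrpos, hr]
      linarith
    have hq1 : q < 1 := lt_of_le_of_lt hq23 (by norm_num)
    have hbound : ∀ n, ‖a (n+2)‖ ≤ (M * q^2) * q^n := by
      intro n
      have : ‖a (n+2)‖ = ‖τ‖^(n+2) * ‖p.coeff (n+2)‖ := by
        rw [ha]; simp [norm_mul, norm_pow]
      rw [this]
      have h1 : ‖τ‖^(n+2) * ‖p.coeff (n+2)‖ ≤ ‖τ‖^(n+2) * (M / r^(n+2)) := by
        gcongr; exact hcoeff (n+2)
      refine h1.trans (le_of_eq ?_)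
      have e1 : (M * q^2) * q^n = M * q^(n+2) := by ring
      rw [e1, hqdef, div_pow]
      ring
    have hgeo : HasSum (fun n => (M * q^2) * q^n) ((M * q^2) * (1-q)⁻¹) :=
      (hasSum_geometric_of_lt_one hq0 hq1).mul_left _
    have hnorm : ‖g τ - (a 0 + a 1)‖ ≤ (M * q^2) * (1-q)⁻¹ := by
      rw [← htail.tsum_eq]
      exact tsum_of_norm_bounded hgeo hbound
    have hinv : (1-q)⁻¹ ≤ 3 := by
      have h13 : (1/3 : ℝ) ≤ 1 - q := by linarith
      have := inv_anti₀ (by norm_num : (0:ℝ) < 1/3) h13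
      simpa using this
    rw [heq]
    refine hnorm.trans ?_
    calc (M * q^2) * (1-q)⁻¹ ≤ (M * q^2) * 3 := by
          have : (0:ℝ) ≤ M * q^2 := mul_nonneg hM0 (sq_nonneg q)
          exact mul_le_mul_of_nonneg_left hinv this
      _ ≤ 6*M/ρ^2 * ‖τ‖^2 := by
          rw [hqdef, div_pow]
          have h1 : M * (‖τ‖^2/r^2) * 3 = (3*M*‖τ‖^2)/r^2 := by ring
          have h2 : 6*M/ρ^2 * ‖τ‖^2 = (6*M*‖τ‖^2)/ρ^2 := by ring
          rw [h1, h2, div_le_div_iff₀ (by positivity) (by positivity), hr]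
          nlinarith [mul_nonneg (mul_nonneg hM0 (sq_nonneg ‖τ‖)) (sq_nonneg ρ)]
  · rw [hderiv]
    refine (hcoeff 1).trans ?_
    rw [pow_one, div_le_div_iff₀ hrpos hρ, hr]
    nlinarith [mul_nonneg hM0 hρ.le]

variable {E : Type*} [NormedAddCommGroup E] [NormedSpace ℂ E]

lemma lemB0 {G : E → ℂ} {z₀ : E} {ρ M : ℝ} (hρ : 0 < ρ)
    (hd : DifferentiableOn ℂ G (ball z₀ ρ))
    (hb : ∀ z ∈ ball z₀ ρ, ‖G z‖ ≤ M) (u : E) (hu : ‖u‖ = 1) :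
    (∀ τ : ℂ, ‖τ‖ ≤ ρ/2 →
      ‖G (z₀ + τ • u) - G z₀ - fderiv ℂ G z₀ u * τ‖ ≤ 6*M/ρ^2 * ‖τ‖^2) ∧
      ‖fderiv ℂ G z₀ u‖ ≤ 2*M/ρ := by
  set g : ℂ → ℂ := fun t => G (z₀ + t • u) with hg
  have haff : ∀ t : ℂ, t ∈ ball (0:ℂ) ρ → z₀ + t • u ∈ ball z₀ ρ := by
    intro t ht
    simp only [mem_ball, dist_zero_right] at ht
    simp only [mem_ball, dist_self_add_left, norm_smul, hu, mul_one]
    exact ht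
  have hdiff_aff : ∀ t : ℂ, DifferentiableAt ℂ (fun s : ℂ => z₀ + s • u) t :=
    fun t => (differentiableAt_id.smul_const u).const_add z₀
  have hgd : DifferentiableOn ℂ g (ball 0 ρ) := by
    intro t ht
    exact ((hd.differentiableAt (isOpen_ball.mem_nhds (haff t ht))).comp t
      (hdiff_aff t)).differentiableWithinAt
  have hgb : ∀ t ∈ ball (0:ℂ) ρ, ‖g t‖ ≤ M := fun t ht => hb _ (haff t ht)
  have hGdiff : DifferentiableAt ℂ G z₀ :=
    hd.differentiableAt (isOpen_ball.mem_nhds (mem_ball_self hρ))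
  have hderiv : deriv g 0 = fderiv ℂ G z₀ u := by
    have h1 : HasDerivAt (fun t : ℂ => z₀ + t • u) u 0 := by
      simpa using ((hasDerivAt_id (0:ℂ)).smul_const u).const_add z₀
    have h2 : HasFDerivAt G (fderiv ℂ G z₀) ((fun t : ℂ => z₀ + t • u) 0) := by
      simpa using hGdiff.hasFDerivAt
    have h3 : HasDerivAt g (fderiv ℂ G z₀ u) 0 := h2.comp_hasDerivAt 0 h1
    exact h3.deriv
  have hA := lemA hρ hgd hgb
  rw [hderiv] at hA
  constructor
  · intro τ hτ
    have := hA.1 τ hτ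
    simpa [hg] using this
  · exact hA.2

lemma lemB {G : E → ℂ} {z₀ : E} {ρ M : ℝ} (hρ : 0 < ρ)
    (hd : DifferentiableOn ℂ G (ball z₀ ρ))
    (hb : ∀ z ∈ ball z₀ ρ, ‖G z‖ ≤ M) :
    (∀ v : E, ‖v‖ ≤ ρ/2 →
      ‖G (z₀ + v) - G z₀ - fderiv ℂ G z₀ v‖ ≤ 6*M/ρ^2 * ‖v‖^2) ∧
      ‖fderiv ℂ G z₀‖ ≤ 2*M/ρ := by
  have hM0 : 0 ≤ M := (norm_nonneg _).trans (hb z₀ (mem_ball_self hρ))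
  have key : ∀ v : E, v ≠ 0 →
      (‖v‖ ≤ ρ/2 → ‖G (z₀ + v) - G z₀ - fderiv ℂ G z₀ v‖ ≤ 6*M/ρ^2 * ‖v‖^2) ∧
      ‖fderiv ℂ G z₀ v‖ ≤ 2*M/ρ * ‖v‖ := by
    intro v hv
    have hnv : (0:ℝ) < ‖v‖ := norm_pos_iff.mpr hv
    set u : E := ((‖v‖⁻¹ : ℝ) : ℂ) • v with hudef
    have hu : ‖u‖ = 1 := by
      rw [hudef, norm_smul]
      simp [abs_of_pos (inv_pos.mpr hnv), inv_mul_cancel₀ hnv.ne']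
    have hτu : ((‖v‖ : ℝ) : ℂ) • u = v := by
      rw [hudef, smul_smul]
      norm_cast
      simp [mul_inv_cancel₀ hnv.ne']
    have hB := lemB0 hρ hd hb u hu
    have hfv : fderiv ℂ G z₀ v = fderiv ℂ G z₀ u * ((‖v‖ : ℝ) : ℂ) := by
      conv_lhs => rw [← hτu]
      rw [map_smul, smul_eq_mul, mul_comm]
    constructor
    · intro hvρ
      have := hB.1 ((‖v‖ : ℝ) : ℂ) (by simpa using hvρ)
      rw [hτu] at this
      simpa [hfv] using this
    · rw [hfv, norm_mul]
      simp only [Complex.norm_real, Real.norm_eq_abs, abs_of_pos hnv]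
      exact mul_le_mul_of_nonneg_right hB.2 hnv.le
  constructor
  · intro v hvρ
    rcases eq_or_ne v 0 with rfl | hv
    · simp
    · exact (key v hv).1 hvρ
  · refine ContinuousLinearMap.opNorm_le_bound _ (by positivity) (fun v => ?_)
    rcases eq_or_ne v 0 with rfl | hv
    · simp
    · exact (key v hv).2

set_option synthInstance.maxHeartbeats 400000 in
lemma lemC [FiniteDimensional ℂ E] {c₂ : E} {r₂ M : ℝ} {F : ℕ → E → ℂ} {φ : E → ℂ} {S : Set E}
    (hd : ∀ n, DifferentiableOn ℂ (F n) (ball c₂ r₂))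
    (hb : ∀ n, ∀ z ∈ ball c₂ r₂, ‖F n z‖ ≤ M)
    (hS : S ⊆ ball c₂ r₂)
    (hconv : ∀ z ∈ S, Tendsto (fun n => F n z) atTop (nhds (φ z))) :
    ∃ G : E → ℂ, DifferentiableOn ℂ G (ball c₂ r₂) ∧
      (∀ z ∈ ball c₂ r₂, ‖G z‖ ≤ M) ∧ EqOn G φ S := by
  classical
  obtain ⟨𝒰, h𝒰⟩ : ∃ 𝒰 : Ultrafilter ℕ, (𝒰 : Filter ℕ) ≤ atTop :=
    ⟨Ultrafilter.of atTop, Ultrafilter.of_le _⟩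
  have hex : ∀ z, z ∈ ball c₂ r₂ → ∃ c : ℂ, Tendsto (fun n => F n z) 𝒰 (nhds c) := by
    intro z hz
    have hcpt : IsCompact (closedBall (0:ℂ) M) := isCompact_closedBall _ _
    have hle : (𝒰.map (fun n => F n z) : Filter ℂ) ≤ Filter.principal (closedBall 0 M) := by
      rw [Ultrafilter.coe_map, le_principal_iff, mem_map]
      apply Filter.univ_mem'
      intro n
      simpa [mem_closedBall, dist_zero_right] using hb n z hz
    obtain ⟨c, _, hc⟩ := hcpt.ultrafilter_le_nhds (𝒰.map _) hle
    refine ⟨c, ?_⟩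
    rwa [Tendsto, ← Ultrafilter.coe_map]
  choose G' hG' using hex
  set G : E → ℂ := fun z => if h : z ∈ ball c₂ r₂ then G' z h else 0 with hGdef
  have hGt : ∀ z (hz : z ∈ ball c₂ r₂), Tendsto (fun n => F n z) 𝒰 (nhds (G z)) := by
    intro z hz
    simp only [hGdef, dif_pos hz]
    exact hG' z hz
  have hGb : ∀ z ∈ ball c₂ r₂, ‖G z‖ ≤ M := fun z hz =>
    le_of_tendsto (hGt z hz).norm (Eventually.of_forall fun n => hb n z hz)
  have hGeq : EqOn G φ S := by
    intro z hz
    exact tendsto_nhds_unique (hGt z (hS hz)) ((hconv z hz).mono_left h𝒰)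
  refine ⟨G, ?_, hGb, hGeq⟩
  intro z₀ hz₀
  obtain ⟨ρ, hρdef⟩ : ∃ ρ : ℝ, ρ = r₂ - dist z₀ c₂ := ⟨_, rfl⟩
  have hρ : 0 < ρ := by rw [hρdef, sub_pos]; exact mem_ball.mp hz₀
  have hball : ball z₀ ρ ⊆ ball c₂ r₂ := ball_subset_ball' (by rw [hρdef]; ring_nf; rfl)
  have hM0 : 0 ≤ M := (norm_nonneg _).trans (hb 0 z₀ hz₀)
  have hTay := fun n => lemB hρ ((hd n).mono hball) (fun z hz => hb n z (hball hz))
  -- limit of derivatives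
  obtain ⟨L, hL⟩ : ∃ L : E →L[ℂ] ℂ,
      Tendsto (fun n => fderiv ℂ (F n) z₀) 𝒰 (nhds L) := by
    have hcpt : IsCompact (closedBall (0 : E →L[ℂ] ℂ) (2*M/ρ)) := isCompact_closedBall _ _
    have hle : (𝒰.map (fun n => fderiv ℂ (F n) z₀) : Filter _) ≤
        Filter.principal (closedBall (0 : E →L[ℂ] ℂ) (2*M/ρ)) := by
      rw [Ultrafilter.coe_map, le_principal_iff, mem_map]
      apply Filter.univ_mem'
      intro n
      simpa [mem_closedBall, dist_zero_right] using (hTay n).2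
    obtain ⟨L, _, hc⟩ := hcpt.ultrafilter_le_nhds (𝒰.map _) hle
    refine ⟨L, ?_⟩
    rwa [Tendsto, ← Ultrafilter.coe_map]
  have hkey : ∀ v : E, ‖v‖ ≤ ρ/2 →
      ‖G (z₀ + v) - G z₀ - L v‖ ≤ 6*M/ρ^2 * ‖v‖^2 := by
    intro v hv
    have hmem : z₀ + v ∈ ball c₂ r₂ := hball (by
      simp only [mem_ball, dist_self_add_left]
      linarith)
    have h1 := hGt _ hmem
    have h2 := hGt z₀ hz₀
    have h3 : Tendsto (fun n => fderiv ℂ (F n) z₀ v) 𝒰 (nhds (L v)) := by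
      have hcont : Continuous fun A : E →L[ℂ] ℂ => A v :=
        (ContinuousLinearMap.apply ℂ ℂ v).continuous
      exact (hcont.tendsto L).comp hL
    have hlim : Tendsto (fun n => ‖F n (z₀ + v) - F n z₀ - fderiv ℂ (F n) z₀ v‖) 𝒰
        (nhds ‖G (z₀ + v) - G z₀ - L v‖) := ((h1.sub h2).sub h3).norm
    exact le_of_tendsto hlim (Eventually.of_forall fun n => (hTay n).1 v hv)
  have hder : HasFDerivAt G L z₀ := by
    rw [hasFDerivAt_iff_isLittleO_nhds_zero]
    rw [Asymptotics.isLittleO_iff]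
    intro ε hε
    have hδ : 0 < min (ρ/2) (ε*ρ^2/(6*M+1)) := by positivity
    rw [Metric.eventually_nhds_iff]
    refine ⟨min (ρ/2) (ε*ρ^2/(6*M+1)), hδ, fun {v} hvd => ?_⟩
    rw [dist_zero_right] at hvd
    have hv1 : ‖v‖ ≤ ρ/2 := (hvd.le).trans (min_le_left _ _)
    have hv2 : ‖v‖ ≤ ε*ρ^2/(6*M+1) := (hvd.le).trans (min_le_right _ _)
    have h6 : 6*M/ρ^2 * ‖v‖ ≤ ε := by
      have ha : 6*M/ρ^2 * ‖v‖ ≤ 6*M/ρ^2 * (ε*ρ^2/(6*M+1)) := by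
        have : (0:ℝ) ≤ 6*M/ρ^2 := by positivity
        exact mul_le_mul_of_nonneg_left hv2 this
      refine ha.trans ?_
      rw [div_mul_div_comm, div_le_iff₀ (by positivity)]
      nlinarith [mul_nonneg hε.le (sq_nonneg ρ)]
    calc ‖G (z₀ + v) - G z₀ - L v‖ ≤ 6*M/ρ^2 * ‖v‖^2 := hkey v hv1
      _ = (6*M/ρ^2 * ‖v‖) * ‖v‖ := by ring
      _ ≤ ε * ‖v‖ := mul_le_mul_of_nonneg_right h6 (norm_nonneg v)
  exact hder.differentiableAt.differentiableWithinAt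

end Aux

section Main

variable {d : ℕ} {X : Type*} [AddCommGroup X] [Module ℂ X] [MetricSpace X]
  [IsTopologicalAddGroup X] [ContinuousSMul ℂ X]

/-- The set of `f : X` admitting a bounded holomorphic extension from `ball c₁ r₁`
to `ball c₂ r₂` with bound `M`. -/
def TSet (ι : X →ₗ[ℂ] (EuclideanSpace ℂ (Fin d) → ℂ))
    (c₁ c₂ : EuclideanSpace ℂ (Fin d)) (r₁ r₂ M : ℝ) : Set X :=
  {f | ∃ F : EuclideanSpace ℂ (Fin d) → ℂ,
    DifferentiableOn ℂ F (ball c₂ r₂) ∧ (∀ z ∈ ball c₂ r₂, ‖F z‖ ≤ M) ∧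
    EqOn F (ι f) (ball c₁ r₁)}

lemma TSet_isClosed (ι : X →ₗ[ℂ] (EuclideanSpace ℂ (Fin d) → ℂ))
    (c₁ c₂ : EuclideanSpace ℂ (Fin d)) (r₁ r₂ M : ℝ)
    (hsub : ball c₁ r₁ ⊆ ball c₂ r₂)
    (hconv : ∀ (g : ℕ → X) (f : X), Tendsto g atTop (nhds f) →
      ∀ z ∈ ball c₁ r₁, Tendsto (fun n => ι (g n) z) atTop (nhds (ι f z))) :
    IsClosed (TSet ι c₁ c₂ r₁ r₂ M) := by
  refine IsSeqClosed.isClosed ?_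
  intro g f hg hgf
  choose Fn hFd hFb hFeq using hg
  have hpt : ∀ z ∈ ball c₁ r₁, Tendsto (fun n => Fn n z) atTop (nhds (ι f z)) := by
    intro z hz
    have : (fun n => Fn n z) = fun n => ι (g n) z := funext fun n => hFeq n hz
    rw [this]
    exact hconv g f hgf z hz
  obtain ⟨G, hGd, hGb, hGeq⟩ := lemC hFd hFb hsub hpt
  exact ⟨G, hGd, hGb, hGeq⟩

lemma TSet_compl_dense (ι : X →ₗ[ℂ] (EuclideanSpace ℂ (Fin d) → ℂ))
    (c₁ c₂ : EuclideanSpace ℂ (Fin d)) (r₁ r₂ M : ℝ)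
    (hg : ∃ g : X, ¬ ∃ (F : EuclideanSpace ℂ (Fin d) → ℂ) (M' : ℝ),
      DifferentiableOn ℂ F (ball c₂ r₂) ∧
      (∀ z ∈ ball c₂ r₂, ‖F z‖ ≤ M') ∧
      EqOn F (ι g) (ball c₁ r₁)) :
    Dense (TSet ι c₁ c₂ r₁ r₂ M)ᶜ := by
  rw [dense_iff_inter_open]
  rintro U hUo ⟨f, hfU⟩
  by_cases hfT : f ∈ TSet ι c₁ c₂ r₁ r₂ M
  · obtain ⟨g, hgne⟩ := hg
    have hc : Continuous fun t : ℂ => f + t • g :=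
      continuous_const.add (continuous_id.smul continuous_const)
    have h0 : (fun t : ℂ => f + t • g) 0 = f := by simp
    have hev : ∀ᶠ t : ℂ in nhds 0, f + t • g ∈ U := by
      have h1 := hc.tendsto 0
      have h2 : f + (0:ℂ) • g = f := by simp
      rw [h2] at h1
      exact h1 (hUo.mem_nhds hfU)
    have hev' : ∀ᶠ t : ℂ in nhdsWithin 0 {(0:ℂ)}ᶜ, f + t • g ∈ U ∧ t ≠ 0 :=
      (hev.filter_mono nhdsWithin_le_nhds).and eventually_mem_nhdsWithin
    obtain ⟨t, htU, htne⟩ := hev'.exists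
    refine ⟨f + t • g, htU, fun hmem => ?_⟩
    obtain ⟨F₂, hd₂, hb₂, he₂⟩ := hmem
    obtain ⟨F₁, hd₁, hb₁, he₁⟩ := hfT
    refine hgne ⟨fun z => t⁻¹ * (F₂ z - F₁ z), ‖t⁻¹‖ * (M + M), ?_, ?_, ?_⟩
    · exact (hd₂.sub hd₁).const_mul t⁻¹
    · intro z hz
      rw [norm_mul]
      refine mul_le_mul_of_nonneg_left ?_ (norm_nonneg _)
      exact (norm_sub_le _ _).trans (add_le_add (hb₂ z hz) (hb₁ z hz))
    · intro z hz
      have h₂ : F₂ z = ι f z + t * ι g z := by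
        rw [he₂ hz, map_add, map_smul]
        simp
      have h₁ : F₁ z = ι f z := he₁ hz
      simp only [h₂, h₁]
      rw [add_sub_cancel_left, inv_mul_cancel_left₀ htne]
  · exact ⟨f, hfU, hfT⟩

end Main


/-- `f` is extendable in the sense of Riemann domains from the domain `Ω`. -/
def ExtendableRiemann {d : ℕ} (Ω : Set (EuclideanSpace ℂ (Fin d)))
    (f : EuclideanSpace ℂ (Fin d) → ℂ) : Prop :=
  ∃ (c₁ c₂ : EuclideanSpace ℂ (Fin d)) (r₁ r₂ : ℝ), 0 < r₁ ∧ 0 < r₂ ∧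
    closedBall c₁ r₁ ⊆ ball c₂ r₂ ∩ Ω ∧
    (ball c₂ r₂ ∩ Ω).Nonempty ∧ (ball c₂ r₂ ∩ Ωᶜ).Nonempty ∧
    ∃ (F : EuclideanSpace ℂ (Fin d) → ℂ) (M : ℝ),
      DifferentiableOn ℂ F (ball c₂ r₂) ∧
      (∀ z ∈ ball c₂ r₂, ‖F z‖ ≤ M) ∧
      EqOn F f (ball c₁ r₁)

theorem stmt8 {d : ℕ} (Ω : Set (EuclideanSpace ℂ (Fin d)))
    (hΩo : IsOpen Ω) (hΩc : IsConnected Ω)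
    (X : Type*) [AddCommGroup X] [Module ℂ X] [MetricSpace X] [CompleteSpace X]
    [IsTopologicalAddGroup X] [ContinuousSMul ℂ X]
    (ι : X →ₗ[ℂ] (EuclideanSpace ℂ (Fin d) → ℂ)) (hinj : Function.Injective ι)
    (hholo : ∀ f : X, DifferentiableOn ℂ (ι f) Ω)
    (hptw : ∀ (g : ℕ → X) (f : X), Tendsto g atTop (nhds f) →
      ∀ z ∈ Ω, Tendsto (fun n => ι (g n) z) atTop (nhds (ι f z)))
    (hweak : ∀ (c₁ c₂ : EuclideanSpace ℂ (Fin d)) (r₁ r₂ : ℝ), 0 < r₁ → 0 < r₂ →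
      closedBall c₁ r₁ ⊆ ball c₂ r₂ ∩ Ω →
      (ball c₂ r₂ ∩ Ω).Nonempty → (ball c₂ r₂ ∩ Ωᶜ).Nonempty →
      ∃ f : X, ¬ ∃ (F : EuclideanSpace ℂ (Fin d) → ℂ) (M : ℝ),
        DifferentiableOn ℂ F (ball c₂ r₂) ∧
        (∀ z ∈ ball c₂ r₂, ‖F z‖ ≤ M) ∧
        EqOn F (ι f) (ball c₁ r₁)) :
    Dense {f : X | ¬ ExtendableRiemann Ω (ι f)} ∧
    IsGδ {f : X | ¬ ExtendableRiemann Ω (ι f)} := by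
  classical
  obtain ⟨D, hDcnt, hDdense⟩ :=
    TopologicalSpace.exists_countable_dense (EuclideanSpace ℂ (Fin d))
  set Tcal : (EuclideanSpace ℂ (Fin d)) × (EuclideanSpace ℂ (Fin d)) × ℚ × ℚ × ℕ → Set X := fun s =>
    TSet ι s.1 s.2.1 (s.2.2.1 : ℝ) (s.2.2.2.1 : ℝ) (s.2.2.2.2 : ℝ) with hTcal
  set S : Set ((EuclideanSpace ℂ (Fin d)) × (EuclideanSpace ℂ (Fin d)) × ℚ × ℚ × ℕ) := {s | s.1 ∈ D ∧ s.2.1 ∈ D ∧ 0 < (s.2.2.1 : ℝ) ∧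
    closedBall s.1 (s.2.2.1 : ℝ) ⊆ ball s.2.1 (s.2.2.2.1 : ℝ) ∩ Ω ∧
    (ball s.2.1 (s.2.2.2.1 : ℝ) ∩ Ω).Nonempty ∧
    (ball s.2.1 (s.2.2.2.1 : ℝ) ∩ Ωᶜ).Nonempty} with hS
  have hScnt : S.Countable := by
    have hsub : S ⊆ D ×ˢ (D ×ˢ (univ : Set (ℚ × ℚ × ℕ))) := by
      rintro ⟨c₁, c₂, q₁, q₂, m⟩ hs
      exact ⟨hs.1, hs.2.1, trivial⟩
    exact (hDcnt.prod (hDcnt.prod countable_univ)).mono hsub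
  -- basic facts for s ∈ S
  have hq₂pos : ∀ s ∈ S, (0:ℝ) < (s.2.2.2.1 : ℝ) := by
    rintro ⟨c₁, c₂, q₁, q₂, m⟩ hs
    obtain ⟨x, hx⟩ := hs.2.2.2.2.1
    exact nonempty_ball.mp ⟨x, hx.1⟩
  -- the equivalence
  have hiff : ∀ f : X, ExtendableRiemann Ω (ι f) ↔ ∃ s ∈ S, f ∈ Tcal s := by
    intro f
    constructor
    · rintro ⟨c₁, c₂, r₁, r₂, h1, h2, hsub, hne1, hne2, F, M, hFd, hFb, hFeq⟩
      -- find the max of dist to c₂ on the closed ball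
      have hK : IsCompact (closedBall c₁ r₁) := isCompact_closedBall _ _
      obtain ⟨x₀, hx₀K, hx₀max⟩ := hK.exists_isMaxOn ⟨c₁, mem_closedBall_self h1.le⟩
        ((continuous_id.dist continuous_const).continuousOn)
      have ha : dist x₀ c₂ < r₂ := mem_ball.mp (hsub hx₀K).1
      obtain ⟨w, hwb, hwc⟩ := hne2
      have hwr : dist w c₂ < r₂ := mem_ball.mp hwb
      obtain ⟨η, hηdef⟩ : ∃ η : ℝ, η = min (r₂ - dist x₀ c₂) (r₂ - dist w c₂) := ⟨_, rfl⟩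
      have hη : 0 < η := by rw [hηdef]; exact lt_min (by linarith) (by linarith)
      have hηa : η ≤ r₂ - dist x₀ c₂ := hηdef ▸ min_le_left _ _
      have hηw : η ≤ r₂ - dist w c₂ := hηdef ▸ min_le_right _ _
      obtain ⟨c₂', hc₂'D, hc₂'b⟩ := hDdense.exists_mem_open isOpen_ball
        ⟨c₂, mem_ball_self (by positivity : (0:ℝ) < η/3)⟩
      have hd2 : dist c₂' c₂ < η/3 := mem_ball.mp hc₂'b
      obtain ⟨q₂, hq₂1, hq₂2⟩ := exists_rat_btwn
        (show r₂ - 2*(η/3) < r₂ - η/3 by linarith)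
      have hsub2 : ball c₂' (q₂ : ℝ) ⊆ ball c₂ r₂ := by
        intro x hx
        rw [mem_ball] at hx ⊢
        calc dist x c₂ ≤ dist x c₂' + dist c₂' c₂ := dist_triangle _ _ _
          _ < q₂ + η/3 := by linarith
          _ ≤ r₂ := by linarith
      have hKsub : ∀ x ∈ closedBall c₁ r₁, x ∈ ball c₂' (q₂ : ℝ) := by
        intro x hx
        have hmax : dist x c₂ ≤ dist x₀ c₂ := hx₀max hx
        rw [mem_ball]
        calc dist x c₂' ≤ dist x c₂ + dist c₂ c₂' := dist_triangle _ _ _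
          _ ≤ dist x₀ c₂ + dist c₂ c₂' := by linarith
          _ < (r₂ - η) + η/3 := by rw [dist_comm c₂ c₂']; linarith
          _ ≤ q₂ := by linarith
      have hwmem : w ∈ ball c₂' (q₂ : ℝ) := by
        rw [mem_ball]
        calc dist w c₂' ≤ dist w c₂ + dist c₂ c₂' := dist_triangle _ _ _
          _ < (r₂ - η) + η/3 := by rw [dist_comm c₂ c₂']; linarith
          _ ≤ q₂ := by linarith
      -- inner ball
      obtain ⟨c₁', hc₁'D, hc₁'b⟩ := hDdense.exists_mem_open isOpen_ball
        ⟨c₁, mem_ball_self (by positivity : (0:ℝ) < r₁/4)⟩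
      have hd1 : dist c₁' c₁ < r₁/4 := mem_ball.mp hc₁'b
      obtain ⟨q₁, hq₁1, hq₁2⟩ := exists_rat_btwn (show r₁/2 < r₁*3/4 by linarith)
      have hq₁pos : (0:ℝ) < (q₁ : ℝ) := by linarith
      have hsubB1 : closedBall c₁' (q₁ : ℝ) ⊆ ball c₁ r₁ := by
        intro x hx
        rw [mem_closedBall] at hx
        rw [mem_ball]
        calc dist x c₁ ≤ dist x c₁' + dist c₁' c₁ := dist_triangle _ _ _
          _ < q₁ + r₁/4 := by linarith
          _ ≤ r₁ := by linarith
      have hsubB1' : closedBall c₁' (q₁ : ℝ) ⊆ closedBall c₁ r₁ :=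
        hsubB1.trans ball_subset_closedBall
      refine ⟨(c₁', c₂', q₁, q₂, ⌈M⌉₊), ⟨hc₁'D, hc₂'D, hq₁pos, ?_, ?_, ?_⟩, ?_⟩
      · intro x hx
        exact ⟨hKsub x (hsubB1' hx), (hsub (hsubB1' hx)).2⟩
      · exact ⟨c₁, hKsub c₁ (mem_closedBall_self h1.le),
          (hsub (mem_closedBall_self h1.le)).2⟩
      · exact ⟨w, hwmem, hwc⟩
      · refine ⟨F, hFd.mono hsub2,
          fun z hz => (hFb z (hsub2 hz)).trans (Nat.le_ceil M), fun z hz => ?_⟩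
        exact hFeq (hsubB1 (ball_subset_closedBall hz))
    · rintro ⟨⟨c₁, c₂, q₁, q₂, m⟩, hs, F, hFd, hFb, hFeq⟩
      exact ⟨c₁, c₂, q₁, q₂, hs.2.2.1, hq₂pos _ hs, hs.2.2.2.1, hs.2.2.2.2.1,
        hs.2.2.2.2.2, F, m, hFd, hFb, hFeq⟩
  have hEq : {f : X | ¬ ExtendableRiemann Ω (ι f)} = ⋂ s ∈ S, (Tcal s)ᶜ := by
    ext f
    simp only [mem_setOf_eq, hiff f, mem_iInter, mem_compl_iff, not_exists]
    tauto
  have hopen : ∀ s ∈ S, IsOpen (Tcal s)ᶜ := by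
    rintro ⟨c₁, c₂, q₁, q₂, m⟩ hs
    refine (TSet_isClosed ι c₁ c₂ (q₁ : ℝ) (q₂ : ℝ) (m : ℝ) ?_ ?_).isOpen_compl
    · exact (ball_subset_closedBall.trans hs.2.2.2.1).trans (inter_subset_left)
    · intro g f hgf z hz
      exact hptw g f hgf z ((ball_subset_closedBall.trans hs.2.2.2.1 hz).2)
  have hdense : ∀ s ∈ S, Dense (Tcal s)ᶜ := by
    rintro ⟨c₁, c₂, q₁, q₂, m⟩ hs
    exact TSet_compl_dense ι c₁ c₂ (q₁ : ℝ) (q₂ : ℝ) (m : ℝ)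
      (hweak c₁ c₂ (q₁ : ℝ) (q₂ : ℝ) hs.2.2.1 (hq₂pos _ hs) hs.2.2.2.1
        hs.2.2.2.2.1 hs.2.2.2.2.2)
  constructor
  · rw [hEq]
    exact dense_biInter_of_isOpen hopen hScnt hdense
  · rw [hEq]
    exact IsGδ.biInter hScnt (fun s hs => (hopen s hs).isGδ)
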